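/- Kernel of the Wedderburn polynomial operator: let K be a division ring with endomorphism S and S-derivation D, a ∈ K, and let u₁,…,uₙ ∈ K be right linearly independent over the (S,D)-centralizer C(a). Let pₙ = [t − a^{uᵢ} : 1 ≤ i ≤ n]ₗ. Then ker(pₙ(Tₐ)) = u₁C(a) + ⋯ + uₙC(a), an n-dimensional right C(a)-subspace of K. -/

import Mathlib

/-- The `(S,D)`-conjugate `a^c := S(c)·a·c⁻¹ + D(c)·c⁻¹`. -/
def sdConj {K : Type*} [DivisionRing K] (S : K →+* K) (D : K →+ K) (a c : K) : K :=
  S c * a * c⁻¹ + D c * c⁻¹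

/-- `R` together with `ι : K →+* R` and `t : R` is the skew polynomial ring `K[t;S,D]`:
the commutation rule `t·a = S(a)t + D(a)` holds and every element of `R` is uniquely a
polynomial `Σ ι(cᵢ)·tⁱ`. -/
def IsSkewPolyRing {K R : Type*} [DivisionRing K] [Ring R] (S : K →+* K) (D : K →+ K)
    (ι : K →+* R) (t : R) : Prop :=
  (∀ a : K, t * ι a = ι (S a) * t + ι (D a)) ∧
  (∀ r : R, ∃! c : ℕ →₀ K, r = c.sum fun i k => ι k * t ^ i)

/-- The coefficients of `r ∈ K[t;S,D]`. -/
noncomputable def coeffs {K R : Type*} [DivisionRing K] [Ring R] {S : K →+* K} {D : K →+ K}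
    {ι : K →+* R} {t : R} (h : IsSkewPolyRing S D ι t) (r : R) : ℕ →₀ K :=
  (h.2 r).choose

/-- The degree of `r ∈ K[t;S,D]` (with `deg 0 = 0`). -/
noncomputable def sdeg {K R : Type*} [DivisionRing K] [Ring R] {S : K →+* K} {D : K →+ K}
    {ι : K →+* R} {t : R} (h : IsSkewPolyRing S D ι t) (r : R) : ℕ :=
  (coeffs h r).support.sup id

/-- `r ∈ K[t;S,D]` is monic: its leading coefficient is `1`. -/
noncomputable def SMonic {K R : Type*} [DivisionRing K] [Ring R] {S : K →+* K} {D : K →+ K}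
    {ι : K →+* R} {t : R} (h : IsSkewPolyRing S D ι t) (r : R) : Prop :=
  coeffs h r (sdeg h r) = 1

/-- The `(S,D)`-centralizer of `a`. -/
def sdCentralizer {K : Type*} [DivisionRing K] (S : K →+* K) (D : K →+ K) (a : K) : Set K :=
  {x | x = 0 ∨ S x * a * x⁻¹ + D x * x⁻¹ = a}

/-- The pseudo-linear map `Tₐ(x) = S(x)a + D(x)`. -/
def sdT {K : Type*} [DivisionRing K] (S : K →+* K) (D : K →+ K) (a x : K) : K :=
  S x * a + D x

section Aux

variable {K R : Type*} [DivisionRing K] [Ring R] {S : K →+* K} {D : K →+ K}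
  {ι : K →+* R} {t : R}

/-- The polynomial with coefficient finsupp `c`. -/
def sRepr (ι : K →+* R) (t : R) (c : ℕ →₀ K) : R := c.sum fun i k => ι k * t ^ i

variable (h : IsSkewPolyRing S D ι t)

lemma coeffs_spec (r : R) : r = sRepr ι t (coeffs h r) := (h.2 r).choose_spec.1

lemma coeffs_eq {r : R} {c : ℕ →₀ K} (hr : r = sRepr ι t c) : coeffs h r = c :=
  ((h.2 r).choose_spec.2 c hr).symm

lemma sRepr_zero : sRepr ι t 0 = 0 := Finsupp.sum_zero_index

lemma sRepr_add (c c' : ℕ →₀ K) : sRepr ι t (c + c') = sRepr ι t c + sRepr ι t c' :=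
  Finsupp.sum_add_index' (fun i => by simp) (fun i b₁ b₂ => by simp [add_mul])

lemma sRepr_single (i : ℕ) (k : K) : sRepr ι t (Finsupp.single i k) = ι k * t ^ i :=
  Finsupp.sum_single_index (by simp)

lemma coeffs_zero : coeffs h (0 : R) = 0 := coeffs_eq h (sRepr_zero).symm

lemma coeffs_add (r s : R) : coeffs h (r + s) = coeffs h r + coeffs h s :=
  coeffs_eq h (by rw [sRepr_add, ← coeffs_spec, ← coeffs_spec])

/-- `coeffs` as an additive hom. -/
noncomputable def coeffsA : R →+ (ℕ →₀ K) := AddMonoidHom.mk' (coeffs h) (coeffs_add h)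

lemma coeffs_neg (r : R) : coeffs h (-r) = - coeffs h r := map_neg (coeffsA h) r

lemma coeffs_sub (r s : R) : coeffs h (r - s) = coeffs h r - coeffs h s := map_sub (coeffsA h) r s

lemma coeffs_iota (k : K) : coeffs h (ι k) = Finsupp.single 0 k :=
  coeffs_eq h (by rw [sRepr_single]; simp)

lemma coeffs_one : coeffs h (1 : R) = Finsupp.single 0 1 := by
  simpa using coeffs_iota h 1

lemma eq_zero_of_coeffs (r : R) (hc : coeffs h r = 0) : r = 0 := by
  rw [coeffs_spec h r, hc, sRepr_zero]

lemma coeffs_sRepr (c : ℕ →₀ K) : coeffs h (sRepr ι t c) = c := coeffs_eq h rfl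

lemma iota_mul_sRepr (k : K) (c : ℕ →₀ K) :
    ι k * sRepr ι t c = sRepr ι t (Finsupp.mapRange (k * ·) (mul_zero k) c) := by
  rw [sRepr, Finsupp.mul_sum, sRepr, Finsupp.sum_mapRange_index (fun i => by simp)]
  simp [mul_assoc]

include h in
lemma t_mul_sRepr (c : ℕ →₀ K) :
    t * sRepr ι t c = sRepr ι t ((Finsupp.mapRange S S.map_zero c).mapDomain (· + 1)
      + Finsupp.mapRange D D.map_zero c) := by
  rw [sRepr_add, sRepr, Finsupp.mul_sum]
  rw [sRepr, Finsupp.sum_mapDomain_index (fun b => by simp) (fun b m₁ m₂ => by simp [add_mul]),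
    Finsupp.sum_mapRange_index (fun i => by simp),
    sRepr, Finsupp.sum_mapRange_index (fun i => by simp), ← Finsupp.sum_add]
  apply Finsupp.sum_congr
  intro i _
  rw [← mul_assoc, h.1, add_mul, mul_assoc, ← pow_succ']

lemma sRepr_mul_t (c : ℕ →₀ K) :
    sRepr ι t c * t = sRepr ι t (c.mapDomain (· + 1)) := by
  rw [sRepr, Finsupp.sum_mul, sRepr,
    Finsupp.sum_mapDomain_index (fun b => by simp) (fun b m₁ m₂ => by simp [add_mul])]
  apply Finsupp.sum_congr
  intro i _
  rw [mul_assoc, pow_succ]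

lemma coeffs_iota_mul (k : K) (r : R) :
    coeffs h (ι k * r) = Finsupp.mapRange (k * ·) (mul_zero k) (coeffs h r) := by
  conv_lhs => rw [coeffs_spec h r, iota_mul_sRepr, coeffs_sRepr]

lemma coeffs_t_mul (r : R) :
    coeffs h (t * r) = (Finsupp.mapRange S S.map_zero (coeffs h r)).mapDomain (· + 1)
      + Finsupp.mapRange D D.map_zero (coeffs h r) := by
  conv_lhs => rw [coeffs_spec h r, t_mul_sRepr h, coeffs_sRepr]

lemma coeffs_mul_t (r : R) :
    coeffs h (r * t) = (coeffs h r).mapDomain (· + 1) := by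
  conv_lhs => rw [coeffs_spec h r, sRepr_mul_t, coeffs_sRepr]

end Aux

section Ev

variable {K R : Type*} [DivisionRing K] [Ring R] {S : K →+* K} {D : K →+ K}
  {ι : K →+* R} {t : R}

/-- Evaluation of the operator `r(Tₐ)` at `v`. -/
noncomputable def sEv {S : K →+* K} {D : K →+ K} {ι : K →+* R} {t : R}
    (h : IsSkewPolyRing S D ι t) (a : K) (r : R) (v : K) : K :=
  (coeffs h r).sum fun i k => k * (sdT S D a)^[i] v

variable (h : IsSkewPolyRing S D ι t) (a : K)

/-- `Tₐ` as an additive hom. -/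
def sdTHom (S : K →+* K) (D : K →+ K) (a : K) : K →+ K :=
  AddMonoidHom.mk' (sdT S D a) (fun x y => by simp only [sdT, map_add, add_mul]; abel)

lemma sdT_iter_zero (i : ℕ) : (sdT S D a)^[i] 0 = 0 := by
  induction i with
  | zero => rfl
  | succ n ih => rw [Function.iterate_succ_apply', ih]; simp [sdT]

lemma sdT_iter_add (i : ℕ) (x y : K) :
    (sdT S D a)^[i] (x + y) = (sdT S D a)^[i] x + (sdT S D a)^[i] y := by
  induction i generalizing x y with
  | zero => rfl
  | succ n ih =>
    rw [Function.iterate_succ_apply, Function.iterate_succ_apply,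
      Function.iterate_succ_apply]
    rw [show sdT S D a (x + y) = sdT S D a x + sdT S D a y from map_add (sdTHom S D a) x y, ih]

lemma sEv_zero_left (v : K) : sEv h a (0 : R) v = 0 := by
  rw [sEv, coeffs_zero, Finsupp.sum_zero_index]

lemma sEv_add_left (r s : R) (v : K) :
    sEv h a (r + s) v = sEv h a r v + sEv h a s v := by
  rw [sEv, coeffs_add]
  exact Finsupp.sum_add_index' (fun i => zero_mul _) (fun i b₁ b₂ => add_mul _ _ _)

/-- `sEv` in the polynomial argument, as an additive hom. -/
noncomputable def sEvL (v : K) : R →+ K :=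
  AddMonoidHom.mk' (fun r => sEv h a r v) (fun r s => sEv_add_left h a r s v)

lemma sEv_sRepr (c : ℕ →₀ K) (v : K) :
    sEv h a (sRepr ι t c) v = c.sum fun i k => k * (sdT S D a)^[i] v := by
  rw [sEv, coeffs_sRepr]

lemma sEv_iota (k : K) (v : K) : sEv h a (ι k) v = k * v := by
  rw [sEv, coeffs_iota, Finsupp.sum_single_index (by simp)]
  rfl

lemma sEv_one (v : K) : sEv h a (1 : R) v = v := by
  rw [sEv, coeffs_one, Finsupp.sum_single_index (by simp)]
  simp

lemma sEv_zero_right (r : R) : sEv h a r 0 = 0 := by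
  rw [sEv, Finsupp.sum]
  apply Finset.sum_eq_zero
  intro i _
  rw [sdT_iter_zero, mul_zero]

lemma sdT_mul_left (hD : ∀ a b : K, D (a * b) = S a * D b + D a * b) (k x : K) :
    sdT S D a (k * x) = S k * sdT S D a x + D k * x := by
  simp only [sdT, map_mul, hD]
  noncomm_ring

variable (hD : ∀ a b : K, D (a * b) = S a * D b + D a * b)

include hD in
lemma sEv_t_mul (r : R) (v : K) :
    sEv h a (t * r) v = sdT S D a (sEv h a r v) := by
  set c := coeffs h r with hc
  calc sEv h a (t * r) v
      = ((Finsupp.mapDomain (· + 1) (Finsupp.mapRange S S.map_zero c)).sum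
          fun i k => k * (sdT S D a)^[i] v)
        + (Finsupp.mapRange D D.map_zero c).sum fun i k => k * (sdT S D a)^[i] v := by
        rw [sEv, coeffs_t_mul, ← hc]
        exact Finsupp.sum_add_index' (fun i => zero_mul _) (fun i b₁ b₂ => add_mul _ _ _)
    _ = ((Finsupp.mapRange S S.map_zero c).sum fun i k => k * (sdT S D a)^[i+1] v)
        + (Finsupp.mapRange D D.map_zero c).sum fun i k => k * (sdT S D a)^[i] v := by
        congr 1
        exact Finsupp.sum_mapDomain_index (fun b => zero_mul _) (fun b m₁ m₂ => add_mul _ _ _)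
    _ = (c.sum fun i k => S k * (sdT S D a)^[i+1] v)
        + c.sum fun i k => D k * (sdT S D a)^[i] v := by
        congr 1
        · exact Finsupp.sum_mapRange_index (fun i => zero_mul _)
        · exact Finsupp.sum_mapRange_index (fun i => zero_mul _)
    _ = c.sum fun i k => S k * (sdT S D a)^[i+1] v + D k * (sdT S D a)^[i] v :=
        (Finsupp.sum_add).symm
    _ = c.sum fun i k => sdT S D a (k * (sdT S D a)^[i] v) := by
        apply Finsupp.sum_congr
        intro i _
        rw [sdT_mul_left a hD, Function.iterate_succ_apply']
    _ = sdT S D a (sEv h a r v) := (map_finsuppSum (sdTHom S D a) _ _).symm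

lemma sEv_iota_mul (k : K) (r : R) (v : K) :
    sEv h a (ι k * r) v = k * sEv h a r v := by
  rw [sEv, coeffs_iota_mul, Finsupp.sum_mapRange_index (fun i => by simp), sEv,
    Finsupp.mul_sum]
  simp [mul_assoc]

include h in
lemma sRepr_induction (P : R → Prop) (h0 : P 0)
    (hadd : ∀ r s : R, P r → P s → P (r + s))
    (hsingle : ∀ (k : K) (i : ℕ), P (ι k * t ^ i)) : ∀ r : R, P r := by
  intro r
  rw [coeffs_spec h r]
  generalize coeffs h r = c
  induction c using Finsupp.induction with
  | zero => rw [sRepr_zero]; exact h0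
  | single_add n b f _ _ ih =>
    rw [sRepr_add, sRepr_single]
    exact hadd _ _ (hsingle b n) ih

lemma sEv_monomial (k : K) (i : ℕ) (w : K) :
    sEv h a (ι k * t ^ i) w = k * (sdT S D a)^[i] w := by
  have hck : coeffs h (ι k * t ^ i) = Finsupp.single i k := coeffs_eq h (sRepr_single i k).symm
  rw [sEv, hck,
    Finsupp.sum_single_index (h := fun i k => k * (sdT S D a)^[i] w) (zero_mul _)]

include hD in
lemma sEv_monomial_mul (k : K) (i : ℕ) (g : R) (v : K) :
    sEv h a (ι k * t ^ i * g) v = k * (sdT S D a)^[i] (sEv h a g v) := by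
  induction i generalizing g with
  | zero => simpa using sEv_iota_mul h a k g v
  | succ n ih =>
    rw [pow_succ, mul_assoc, mul_assoc, ← mul_assoc (ι k), ih (t * g),
      sEv_t_mul h a hD, Function.iterate_succ_apply]

include hD in
lemma sEv_mul (f g : R) (v : K) :
    sEv h a (f * g) v = sEv h a f (sEv h a g v) := by
  refine sRepr_induction h
    (fun f => sEv h a (f * g) v = sEv h a f (sEv h a g v)) ?_ ?_ ?_ f
  · show sEv h a ((0 : R) * g) v = sEv h a (0 : R) (sEv h a g v)
    rw [zero_mul, sEv_zero_left, sEv_zero_left]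
  · intro r s hr hs
    show sEv h a ((r + s) * g) v = sEv h a (r + s) (sEv h a g v)
    rw [add_mul, sEv_add_left, sEv_add_left, hr, hs]
  · intro k i
    show sEv h a (ι k * t ^ i * g) v = sEv h a (ι k * t ^ i) (sEv h a g v)
    rw [sEv_monomial_mul h a hD, sEv_monomial h a]

end Ev

section Div

variable {K R : Type*} [DivisionRing K] [Ring R] {S : K →+* K} {D : K →+ K}
  {ι : K →+* R} {t : R} (h : IsSkewPolyRing S D ι t) (a : K)
  (hD : ∀ a b : K, D (a * b) = S a * D b + D a * b)

include h in
lemma div_linear (b : K) (r : R) : ∃ (g : R) (c : K), r = g * (t - ι b) + ι c := by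
  refine sRepr_induction h (fun r => ∃ g c, r = g * (t - ι b) + ι c) ?_ ?_ ?_ r
  · exact ⟨0, 0, by simp⟩
  · rintro r s ⟨g1, c1, rfl⟩ ⟨g2, c2, rfl⟩
    exact ⟨g1 + g2, c1 + c2, by rw [map_add]; noncomm_ring⟩
  · intro k i
    suffices hM : ∀ i : ℕ, ∃ (g : R) (c : K), (t : R) ^ i = g * (t - ι b) + ι c by
      obtain ⟨g, c, hgc⟩ := hM i
      exact ⟨ι k * g, k * c, by rw [hgc, mul_add, ← mul_assoc, map_mul]⟩
    intro i
    induction i with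
    | zero => exact ⟨0, 1, by simp⟩
    | succ n ih =>
      obtain ⟨g, c, hgc⟩ := ih
      refine ⟨t * g + ι (S c), S c * b + D c, ?_⟩
      rw [pow_succ', hgc, mul_add, h.1, map_add, map_mul]
      noncomm_ring

lemma sEv_t (v : K) : sEv h a t v = sdT S D a v := by
  have h1 : (t : R) = ι 1 * t ^ 1 := by simp
  rw [show sEv h a t v = sEv h a (ι 1 * t ^ 1) v from congrArg (fun r => sEv h a r v) h1,
    sEv_monomial h a]
  simp

lemma sEv_sub_left (r s : R) (v : K) : sEv h a (r - s) v = sEv h a r v - sEv h a s v :=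
  map_sub (sEvL h a v) r s

lemma sEv_linear (b v : K) : sEv h a (t - ι b) v = sdT S D a v - b * v := by
  rw [sEv_sub_left, sEv_t, sEv_iota]

lemma sdConj_mul_self {w : K} (hw : w ≠ 0) : sdConj S D a w * w = sdT S D a w := by
  rw [sdConj, sdT, add_mul, inv_mul_cancel_right₀ hw, inv_mul_cancel_right₀ hw]

include hD in
lemma mem_span_linear_iff {v : K} (hv : v ≠ 0) (r : R) :
    r ∈ Ideal.span {t - ι (sdConj S D a v)} ↔ sEv h a r v = 0 := by
  have hlin : sEv h a (t - ι (sdConj S D a v)) v = 0 := by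
    rw [sEv_linear, sdConj_mul_self a hv, sub_self]
  constructor
  · intro hr
    obtain ⟨g, hg⟩ := Submodule.mem_span_singleton.mp hr
    rw [← hg, smul_eq_mul, sEv_mul h a hD, hlin, sEv_zero_right]
  · intro hr
    obtain ⟨g, c, hgc⟩ := div_linear h (sdConj S D a v) r
    have : sEv h a r v = c * v := by
      rw [hgc, sEv_add_left, sEv_mul h a hD, hlin, sEv_zero_right, sEv_iota, zero_add]
    rw [hr] at this
    have hc : c = 0 := by
      rcases mul_eq_zero.mp this.symm with h0 | h0
      · exact h0
      · exact absurd h0 hv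
    rw [hc, map_zero, add_zero] at hgc
    exact Submodule.mem_span_singleton.mpr ⟨g, by rw [smul_eq_mul]; exact hgc.symm⟩

end Div

section Deg

variable {K R : Type*} [DivisionRing K] [Ring R] {S : K →+* K} {D : K →+ K}
  {ι : K →+* R} {t : R} (h : IsSkewPolyRing S D ι t)

lemma coeffs_t_mul_apply_succ (r : R) (j : ℕ) :
    coeffs h (t * r) (j + 1) = S (coeffs h r j) + D (coeffs h r (j + 1)) := by
  rw [coeffs_t_mul, Finsupp.add_apply, Finsupp.mapRange_apply]
  congr 1
  have : (j : ℕ) + 1 = (fun x => x + 1) j := rfl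
  rw [this, Finsupp.mapDomain_apply (add_left_injective 1), Finsupp.mapRange_apply]

lemma coeffs_iota_mul_apply (k : K) (r : R) (j : ℕ) :
    coeffs h (ι k * r) j = k * coeffs h r j := by
  rw [coeffs_iota_mul, Finsupp.mapRange_apply]

lemma degLe_sdeg (r : R) : ∀ j, sdeg h r < j → coeffs h r j = 0 := by
  intro j hj
  by_contra hne
  have hmem : j ∈ (coeffs h r).support := Finsupp.mem_support_iff.mpr hne
  have := Finset.le_sup (f := id) hmem
  rw [id] at this
  exact absurd (lt_of_lt_of_le hj this) (lt_irrefl _)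

lemma sdeg_attained {r : R} (hr : r ≠ 0) : coeffs h r (sdeg h r) ≠ 0 := by
  have hc : coeffs h r ≠ 0 := fun hc => hr (eq_zero_of_coeffs h r hc)
  obtain ⟨b, hb, hsup⟩ := Finset.exists_mem_eq_sup (coeffs h r).support
    (Finsupp.support_nonempty_iff.mpr hc) id
  rw [sdeg, hsup, id]
  exact Finsupp.mem_support_iff.mp hb

lemma coeffs_tpow_mul (s : R) (ks : ℕ) (hs : ∀ j, ks < j → coeffs h s j = 0) (i : ℕ) :
    (∀ j, i + ks < j → coeffs h (t ^ i * s) j = 0) ∧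
      coeffs h (t ^ i * s) (i + ks) = (S : K → K)^[i] (coeffs h s ks) := by
  induction i with
  | zero => simpa using hs
  | succ n ih =>
    have hq : (t : R) ^ (n + 1) * s = t * (t ^ n * s) := by
      rw [pow_succ', mul_assoc]
    constructor
    · intro j hj
      obtain ⟨j', rfl⟩ : ∃ j', j = j' + 1 := ⟨j - 1, by omega⟩
      rw [hq, coeffs_t_mul_apply_succ, ih.1 j' (by omega), ih.1 (j' + 1) (by omega),
        map_zero, map_zero, add_zero]
    · have : n + 1 + ks = (n + ks) + 1 := by omega
      rw [this, hq, coeffs_t_mul_apply_succ, ih.2, ih.1 (n + ks + 1) (by omega), map_zero,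
        add_zero, Function.iterate_succ_apply']

lemma coeffs_mul_bound (r s : R) (mr ks : ℕ)
    (hr : ∀ j, mr < j → coeffs h r j = 0) (hs : ∀ j, ks < j → coeffs h s j = 0) :
    (∀ j, mr + ks < j → coeffs h (r * s) j = 0) ∧
      coeffs h (r * s) (mr + ks) = coeffs h r mr * (S : K → K)^[mr] (coeffs h s ks) := by
  have hrs : r * s = (coeffs h r).sum fun i k => ι k * (t ^ i * s) := by
    conv_lhs => rw [coeffs_spec h r, sRepr, Finsupp.sum_mul]
    apply Finsupp.sum_congr
    intro i _
    rw [mul_assoc]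
  have hco : ∀ j, coeffs h (r * s) j
      = (coeffs h r).sum fun i k => k * coeffs h (t ^ i * s) j := by
    intro j
    rw [hrs, show coeffs h ((coeffs h r).sum fun i k => ι k * (t ^ i * s))
        = (coeffs h r).sum fun i k => coeffs h (ι k * (t ^ i * s)) from
      map_finsuppSum (coeffsA h) _ _, Finsupp.sum_apply]
    apply Finsupp.sum_congr
    intro i _
    rw [coeffs_iota_mul_apply]
  have hsupp : ∀ i ∈ (coeffs h r).support, i ≤ mr := by
    intro i hi
    by_contra hlt
    exact Finsupp.mem_support_iff.mp hi (hr i (by omega))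
  constructor
  · intro j hj
    rw [hco, Finsupp.sum]
    apply Finset.sum_eq_zero
    intro i hi
    rw [(coeffs_tpow_mul h s ks hs i).1 j (by have := hsupp i hi; omega), mul_zero]
  · rw [hco, Finsupp.sum]
    rw [Finset.sum_eq_single mr]
    · rw [(coeffs_tpow_mul h s ks hs mr).2]
    · intro i hi hne
      have hile : i ≤ mr := hsupp i hi
      rw [(coeffs_tpow_mul h s ks hs i).1 (mr + ks) (by omega), mul_zero]
    · intro hmr
      rw [Finsupp.notMem_support_iff.mp hmr, zero_mul]

lemma iter_S_one (m : ℕ) : (S : K → K)^[m] 1 = 1 := by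
  induction m with
  | zero => rfl
  | succ n ih => rw [Function.iterate_succ_apply', ih, map_one]

lemma iter_S_ne_zero {x : K} (hx : x ≠ 0) (m : ℕ) : (S : K → K)^[m] x ≠ 0 := by
  induction m with
  | zero => exact hx
  | succ n ih =>
    rw [Function.iterate_succ_apply']
    intro h0
    exact ih (S.injective (by rw [h0, map_zero]))

lemma sdeg_le_of_factor (p g q : R) (nq : ℕ) (hq : q = g * p)
    (hqd : ∀ j, nq < j → coeffs h q j = 0) (hqn : coeffs h q nq ≠ 0)
    (hpm : SMonic h p) : sdeg h p ≤ nq := by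
  by_contra hgt
  push_neg at hgt
  have hg0 : g ≠ 0 := by
    rintro rfl
    rw [zero_mul] at hq
    exact hqn (by rw [hq, coeffs_zero]; rfl)
  have hp0 : p ≠ 0 := by
    rintro rfl
    exact one_ne_zero (by rw [← hpm, coeffs_zero]; rfl)
  have hgl := sdeg_attained h hg0
  have := coeffs_mul_bound h g p (sdeg h g) (sdeg h p) (degLe_sdeg h g) (degLe_sdeg h p)
  rw [← hq, hpm] at this
  have htop : coeffs h q (sdeg h g + sdeg h p) ≠ 0 := by
    rw [this.2, iter_S_one]
    simpa using hgl
  exact htop (hqd _ (by omega))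

lemma monic_factor (f g : R) (b : K) (d : ℕ) (hf : f = g * (t - ι b))
    (hfd : ∀ j, d + 1 < j → coeffs h f j = 0) (hftop : coeffs h f (d + 1) = 1) :
    (∀ j, d < j → coeffs h g j = 0) ∧ coeffs h g d = 1 := by
  have hlin : coeffs h (t - ι b) = Finsupp.single 1 1 + Finsupp.single 0 (-b) := by
    apply coeffs_eq h
    rw [sRepr_add, sRepr_single, sRepr_single, pow_one, pow_zero, mul_one, map_neg, map_one]
    noncomm_ring
  have hlind : ∀ j, 1 < j → coeffs h (t - ι b) j = 0 := by
    intro j hj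
    rw [hlin, Finsupp.add_apply, Finsupp.single_apply, Finsupp.single_apply,
      if_neg (by omega), if_neg (by omega), add_zero]
  have hlintop : coeffs h (t - ι b) 1 = 1 := by
    rw [hlin, Finsupp.add_apply, Finsupp.single_apply, Finsupp.single_apply,
      if_pos rfl, if_neg (by omega), add_zero]
  have hg0 : g ≠ 0 := by
    rintro rfl
    rw [zero_mul] at hf
    rw [hf, coeffs_zero] at hftop
    exact one_ne_zero hftop.symm
  have hgl := sdeg_attained h hg0
  have hmul := coeffs_mul_bound h g (t - ι b) (sdeg h g) 1 (degLe_sdeg h g) hlind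
  rw [← hf, hlintop] at hmul
  have htopg : coeffs h f (sdeg h g + 1) ≠ 0 := by
    rw [hmul.2, iter_S_one]
    simpa using hgl
  have hgd : sdeg h g ≤ d := by
    by_contra hgt
    exact htopg (hfd _ (by omega))
  have hgle : ∀ j, d < j → coeffs h g j = 0 := fun j hj => degLe_sdeg h g j (by omega)
  have hmul2 := coeffs_mul_bound h g (t - ι b) d 1 hgle hlind
  rw [← hf, hlintop] at hmul2
  refine ⟨hgle, ?_⟩
  have := hmul2.2
  rw [hftop, iter_S_one, mul_one] at this
  exact this.symm

end Deg

section Central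

variable {K : Type*} [DivisionRing K] {S : K →+* K} {D : K →+ K} {a : K}
  (hD : ∀ a b : K, D (a * b) = S a * D b + D a * b)

include hD in
lemma D_one : D 1 = 0 := by
  have h1 := hD 1 1
  rw [mul_one, S.map_one, one_mul, mul_one] at h1
  have h2 : D 1 + 0 = D 1 + D 1 := by rw [add_zero]; exact h1
  exact (add_left_cancel h2).symm

include hD in
lemma ca_one : S (1 : K) * a + D 1 = a * 1 := by
  rw [map_one, one_mul, D_one hD, add_zero, mul_one]

lemma ca_zero : S (0 : K) * a + D 0 = a * 0 := by simp

include hD in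
lemma ca_mul {c d : K} (hc : S c * a + D c = a * c) (hd : S d * a + D d = a * d) :
    S (c * d) * a + D (c * d) = a * (c * d) := by
  calc S (c * d) * a + D (c * d)
      = S c * (S d * a + D d) + D c * d := by rw [map_mul, hD]; noncomm_ring
    _ = S c * (a * d) + D c * d := by rw [hd]
    _ = (S c * a + D c) * d := by noncomm_ring
    _ = a * (c * d) := by rw [hc]; noncomm_ring

lemma ca_neg {c : K} (hc : S c * a + D c = a * c) :
    S (-c) * a + D (-c) = a * (-c) := by
  rw [map_neg, map_neg, neg_mul, ← neg_add, hc, mul_neg]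

include hD in
lemma ca_inv {c : K} (hc : S c * a + D c = a * c) :
    S c⁻¹ * a + D c⁻¹ = a * c⁻¹ := by
  by_cases h0 : c = 0
  · simp [h0]
  · have hSc : S c ≠ 0 := fun hs => h0 (S.injective (by rw [hs, map_zero]))
    have hDinv : D c⁻¹ = -((S c)⁻¹ * (D c * c⁻¹)) := by
      have h1 : D (c⁻¹ * c) = S c⁻¹ * D c + D c⁻¹ * c := hD c⁻¹ c
      rw [inv_mul_cancel₀ h0, D_one hD] at h1
      have h2 : D c⁻¹ * c = -(S c⁻¹ * D c) := by
        rw [eq_neg_iff_add_eq_zero, add_comm]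
        exact h1.symm
      have h3 := congrArg (· * c⁻¹) h2
      rw [mul_assoc, mul_inv_cancel₀ h0, mul_one] at h3
      rw [h3, map_inv₀, neg_mul, mul_assoc]
    calc S c⁻¹ * a + D c⁻¹
        = (S c)⁻¹ * (a - D c * c⁻¹) := by rw [map_inv₀, hDinv]; noncomm_ring
      _ = (S c)⁻¹ * ((a * c - D c) * c⁻¹) := by
          rw [sub_mul, mul_inv_cancel_right₀ h0]
      _ = (S c)⁻¹ * (S c * a * c⁻¹) := by rw [← eq_sub_of_add_eq hc]
      _ = a * c⁻¹ := by rw [← mul_assoc, ← mul_assoc, inv_mul_cancel₀ hSc, one_mul]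

include hD in
lemma sdT_smul {c : K} (hc : S c * a + D c = a * c) (x : K) :
    sdT S D a (x * c) = sdT S D a x * c := by
  calc sdT S D a (x * c)
      = S x * (S c * a + D c) + D x * c := by rw [sdT, map_mul, hD]; noncomm_ring
    _ = S x * (a * c) + D x * c := by rw [hc]
    _ = sdT S D a x * c := by rw [sdT]; noncomm_ring

include hD in
lemma sdT_iter_smul {c : K} (hc : S c * a + D c = a * c) (x : K) (i : ℕ) :
    (sdT S D a)^[i] (x * c) = (sdT S D a)^[i] x * c := by
  induction i generalizing x with
  | zero => rfl
  | succ n ih =>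
    rw [Function.iterate_succ_apply, Function.iterate_succ_apply, sdT_smul hD hc, ih]

include hD in
/-- Kernel of `Tₐ - a^w` is `w·C(a)`. -/
lemma ker_phi {w : K} (hw : w ≠ 0) {z : K} (hz : sdT S D a z = sdConj S D a w * z) :
    ∃ e : K, (S e * a + D e = a * e) ∧ z = w * e := by
  by_cases hz0 : z = 0
  · exact ⟨0, ca_zero, by rw [hz0, mul_zero]⟩
  · refine ⟨w⁻¹ * z, ?_, by rw [← mul_assoc, mul_inv_cancel₀ hw, one_mul]⟩
    set e := w⁻¹ * z with he
    have hze : z = w * e := by rw [he, ← mul_assoc, mul_inv_cancel₀ hw, one_mul]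
    have hSw : S w ≠ 0 := fun hs => hw (S.injective (by rw [hs, map_zero]))
    have haw : sdConj S D a w * w = S w * a + D w := sdConj_mul_self a hw
    have key : S w * (S e * a + D e) + D w * e = S w * (a * e) + D w * e := by
      calc S w * (S e * a + D e) + D w * e
          = sdT S D a (w * e) := by rw [sdT_mul_left a hD]; rfl
        _ = sdConj S D a w * (w * e) := by rw [← hze]; exact hz
        _ = (S w * a + D w) * e := by rw [← mul_assoc, haw]
        _ = S w * (a * e) + D w * e := by noncomm_ring
    have key2 := add_right_cancel key
    exact mul_left_cancel₀ hSw key2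

end Central

section Ker

variable {K R : Type*} [DivisionRing K] [Ring R] {S : K →+* K} {D : K →+ K}
  {ι : K →+* R} {t : R} (h : IsSkewPolyRing S D ι t) (a : K)
  (hD : ∀ a b : K, D (a * b) = S a * D b + D a * b)

lemma sEv_add_right (r : R) (x y : K) :
    sEv h a r (x + y) = sEv h a r x + sEv h a r y := by
  rw [sEv, sEv, sEv, ← Finsupp.sum_add]
  apply Finsupp.sum_congr
  intro i _
  rw [sdT_iter_add, mul_add]

/-- `sEv` in the vector argument, as an additive hom. -/
noncomputable def sEvR (r : R) : K →+ K :=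
  AddMonoidHom.mk' (sEv h a r) (sEv_add_right h a r)

include hD in
lemma sEv_smul (r : R) {c : K} (hc : S c * a + D c = a * c) (x : K) :
    sEv h a r (x * c) = sEv h a r x * c := by
  rw [sEv, sEv, Finsupp.sum_mul]
  apply Finsupp.sum_congr
  intro i _
  rw [sdT_iter_smul hD hc, mul_assoc]

include hD in
lemma ker_dep : ∀ (d : ℕ) (f : R), (∀ j, d < j → coeffs h f j = 0) → coeffs h f d = 1 →
    ∀ x : Fin (d + 1) → K, (∀ i, sEv h a f (x i) = 0) →
    ∃ c : Fin (d + 1) → K, (∀ i, S (c i) * a + D (c i) = a * c i) ∧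
      (∑ i, x i * c i) = 0 ∧ ∃ i, c i ≠ 0 := by
  intro d
  induction d with
  | zero =>
    intro f hb ht x hx
    have hcf : coeffs h f = Finsupp.single 0 1 := by
      ext j
      cases j with
      | zero => rw [Finsupp.single_eq_same]; exact ht
      | succ n => rw [hb (n + 1) (by omega), Finsupp.single_apply, if_neg (by omega)]
    have hx0 : x 0 = 0 := by
      have h0 := hx 0
      rw [sEv, hcf,
        Finsupp.sum_single_index (h := fun i k => k * (sdT S D a)^[i] (x 0)) (zero_mul _)] at h0
      simpa using h0
    refine ⟨fun _ => 1, fun _ => ca_one hD, ?_, ⟨0, one_ne_zero⟩⟩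
    simp [Fin.sum_univ_one, hx0]
  | succ d ih =>
    intro f hb ht x hx
    by_cases hx0 : ∀ i, x i = 0
    · refine ⟨fun _ => 1, fun _ => ca_one hD, ?_, ⟨0, one_ne_zero⟩⟩
      apply Finset.sum_eq_zero
      intro i _
      rw [hx0 i, zero_mul]
    · push_neg at hx0
      obtain ⟨j, hj⟩ := hx0
      obtain ⟨g, cc, hgc⟩ := div_linear h (sdConj S D a (x j)) f
      have hTw : sEv h a (t - ι (sdConj S D a (x j))) (x j) = 0 := by
        rw [sEv_linear, sdConj_mul_self a hj, sub_self]
      have hcc : cc = 0 := by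
        have h0 := hx j
        rw [hgc, sEv_add_left, sEv_mul h a hD, hTw, sEv_zero_right, sEv_iota, zero_add] at h0
        rcases mul_eq_zero.mp h0 with h1 | h1
        · exact h1
        · exact absurd h1 hj
      rw [hcc, map_zero, add_zero] at hgc
      obtain ⟨hgb, hgt⟩ := monic_factor h f g (sdConj S D a (x j)) d hgc hb ht
      have hker : ∀ i : Fin (d + 1),
          sEv h a g (sEv h a (t - ι (sdConj S D a (x j))) (x (j.succAbove i))) = 0 := by
        intro i
        rw [← sEv_mul h a hD, ← hgc]
        exact hx _
      obtain ⟨c', hc'mem, hc'sum, i0, hi0⟩ := ih g hgb hgt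
        (fun i => sEv h a (t - ι (sdConj S D a (x j))) (x (j.succAbove i))) hker
      have hφz : sEv h a (t - ι (sdConj S D a (x j)))
          (∑ i : Fin (d + 1), x (j.succAbove i) * c' i) = 0 := by
        rw [show sEv h a (t - ι (sdConj S D a (x j))) (∑ i : Fin (d + 1), x (j.succAbove i) * c' i)
            = ∑ i : Fin (d + 1), sEv h a (t - ι (sdConj S D a (x j))) (x (j.succAbove i) * c' i)
          from map_sum (sEvR h a _) _ _]
        rw [← hc'sum]
        apply Finset.sum_congr rfl
        intro i _
        exact sEv_smul h a hD _ (hc'mem i) _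
      have hTz : sdT S D a (∑ i : Fin (d + 1), x (j.succAbove i) * c' i)
          = sdConj S D a (x j) * (∑ i : Fin (d + 1), x (j.succAbove i) * c' i) := by
        rw [sEv_linear] at hφz
        exact sub_eq_zero.mp hφz
      obtain ⟨e, hemem, hze⟩ := ker_phi hD hj hTz
      set cfun : Fin (d + 1 + 1) → K := j.insertNth (-e) c' with hcfun
      refine ⟨cfun, ?_, ?_, ?_⟩
      · intro i
        refine Fin.succAboveCases j ?_ ?_ i
        · rw [hcfun, Fin.insertNth_apply_same]
          exact ca_neg hemem
        · intro i'
          rw [hcfun, Fin.insertNth_apply_succAbove]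
          exact hc'mem i'
      · rw [Fin.sum_univ_succAbove (fun i => x i * cfun i) j,
          hcfun, Fin.insertNth_apply_same]
        have hrest : ∑ i : Fin (d + 1),
              x (j.succAbove i) * (j.insertNth (-e) c' : Fin (d + 1 + 1) → K) (j.succAbove i)
            = ∑ i : Fin (d + 1), x (j.succAbove i) * c' i := by
          apply Finset.sum_congr rfl
          intro i _
          rw [Fin.insertNth_apply_succAbove]
        rw [hrest, hze, mul_neg, neg_add_cancel]
      · refine ⟨j.succAbove i0, ?_⟩
        rw [hcfun, Fin.insertNth_apply_succAbove]
        exact hi0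

include hD in
lemma ker_dep_pad (d m : ℕ) (hdm : d ≤ m) (f : R)
    (hb : ∀ j, d < j → coeffs h f j = 0) (ht : coeffs h f d = 1)
    (x : Fin (m + 1) → K) (hx : ∀ i, sEv h a f (x i) = 0) :
    ∃ c : Fin (m + 1) → K, (∀ i, S (c i) * a + D (c i) = a * c i) ∧
      (∑ i, x i * c i) = 0 ∧ ∃ i, c i ≠ 0 := by
  have hle : d + 1 ≤ m + 1 := by omega
  obtain ⟨c', hmem, hsum, i0, hi0⟩ := ker_dep h a hD d f hb ht
    (fun i => x (Fin.castLE hle i)) (fun i => hx _)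
  refine ⟨fun i => if hi : (i : ℕ) < d + 1 then c' ⟨i, hi⟩ else 0, ?_, ?_, ?_⟩
  · intro i
    beta_reduce
    by_cases hi : (i : ℕ) < d + 1
    · rw [dif_pos hi]; exact hmem _
    · rw [dif_neg hi]; exact ca_zero
  · beta_reduce
    have hmap : ∑ i : Fin (m + 1),
        x i * (if hi : (i : ℕ) < d + 1 then c' ⟨i, hi⟩ else 0)
        = ∑ i ∈ (Finset.univ : Finset (Fin (d + 1))).map
            ⟨Fin.castLE hle, Fin.castLE_injective hle⟩,
          x i * (if hi : (i : ℕ) < d + 1 then c' ⟨i, hi⟩ else 0) := by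
      symm
      apply Finset.sum_subset (Finset.subset_univ _)
      intro i _ hni
      have : ¬ (i : ℕ) < d + 1 := by
        intro hlt
        exact hni (Finset.mem_map.mpr ⟨⟨(i : ℕ), hlt⟩, Finset.mem_univ _, Fin.ext rfl⟩)
      rw [dif_neg this, mul_zero]
    rw [hmap, Finset.sum_map]
    refine Eq.trans (Finset.sum_congr rfl ?_) hsum
    intro i _
    simp only [Function.Embedding.coeFn_mk]
    have hlt : ((Fin.castLE hle i : Fin (m + 1)) : ℕ) < d + 1 := i.isLt
    rw [dif_pos hlt]
    rw [show (⟨((Fin.castLE hle i : Fin (m + 1)) : ℕ), hlt⟩ : Fin (d + 1)) = i from Fin.ext rfl]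
  · refine ⟨Fin.castLE hle i0, ?_⟩
    beta_reduce
    have hlt : ((Fin.castLE hle i0 : Fin (m + 1)) : ℕ) < d + 1 := i0.isLt
    rw [dif_pos hlt]
    have : (⟨((Fin.castLE hle i0 : Fin (m + 1)) : ℕ), hlt⟩ : Fin (d + 1)) = i0 := Fin.ext rfl
    rw [this]
    exact hi0

end Ker

section Main

variable {K R : Type*} [DivisionRing K] [Ring R] {S : K →+* K} {D : K →+ K}
  {ι : K →+* R} {t : R} (h : IsSkewPolyRing S D ι t) (a : K)
  (hD : ∀ a b : K, D (a * b) = S a * D b + D a * b)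

include hD in
lemma exists_q (n : ℕ) (u : Fin n → K) (hu : ∀ i, u i ≠ 0) :
    ∀ k : ℕ, ∃ (q : R) (d : ℕ), d ≤ k ∧ (∀ j, d < j → coeffs h q j = 0) ∧ coeffs h q d = 1 ∧
      ∀ i : Fin n, (i : ℕ) < k → q ∈ Ideal.span {t - ι (sdConj S D a (u i))} := by
  intro k
  induction k with
  | zero =>
    refine ⟨1, 0, le_refl 0, ?_, ?_, fun i hik => absurd hik (by omega)⟩
    · intro j hj
      rw [coeffs_one, Finsupp.single_apply, if_neg (by omega)]
    · rw [coeffs_one, Finsupp.single_eq_same]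
  | succ k ihk =>
    obtain ⟨q, d, hdk, hbound, htop, hmem⟩ := ihk
    by_cases hkn : k < n
    · by_cases hw : sEv h a q (u ⟨k, hkn⟩) = 0
      · refine ⟨q, d, by omega, hbound, htop, ?_⟩
        intro i hik
        by_cases hik' : (i : ℕ) < k
        · exact hmem i hik'
        · have hieq : i = ⟨k, hkn⟩ := Fin.ext (show (i : ℕ) = k by omega)
          rw [hieq]
          exact (mem_span_linear_iff h a hD (hu ⟨k, hkn⟩) q).mpr hw
      · have hsplit : (t - ι (sdConj S D a (sEv h a q (u ⟨k, hkn⟩)))) * q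
            = t * q - ι (sdConj S D a (sEv h a q (u ⟨k, hkn⟩))) * q := by noncomm_ring
        refine ⟨(t - ι (sdConj S D a (sEv h a q (u ⟨k, hkn⟩)))) * q, d + 1, by omega, ?_, ?_, ?_⟩
        · intro j hj
          obtain ⟨j', rfl⟩ : ∃ j', j = j' + 1 := ⟨j - 1, by omega⟩
          rw [hsplit, coeffs_sub, Finsupp.sub_apply, coeffs_t_mul_apply_succ,
            coeffs_iota_mul_apply, hbound j' (by omega), hbound (j' + 1) (by omega),
            map_zero, map_zero, mul_zero, add_zero, sub_zero]
        · rw [hsplit, coeffs_sub, Finsupp.sub_apply, coeffs_t_mul_apply_succ,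
            coeffs_iota_mul_apply, htop, hbound (d + 1) (by omega),
            map_zero, map_one, mul_zero, add_zero, sub_zero]
        · intro i hik
          by_cases hik' : (i : ℕ) < k
          · have hmem' := hmem i hik'
            have h2 := (Ideal.span {t - ι (sdConj S D a (u i))}).smul_mem
              (t - ι (sdConj S D a (sEv h a q (u ⟨k, hkn⟩)))) hmem'
            rw [smul_eq_mul] at h2
            exact h2
          · have hieq : i = ⟨k, hkn⟩ := Fin.ext (show (i : ℕ) = k by omega)
            rw [hieq]
            apply (mem_span_linear_iff h a hD (hu ⟨k, hkn⟩) _).mpr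
            rw [sEv_mul h a hD, sEv_linear, sdConj_mul_self a hw, sub_self]
    · refine ⟨q, d, by omega, hbound, htop, ?_⟩
      intro i hik
      exact hmem i (by have := i.isLt; omega)

end Main


/-- Kernel of the Wedderburn polynomial operator: if `u₁,…,uₙ` are right linearly
independent over `C(a)` and `pₙ` is the monic llcm of the `t − a^{uᵢ}`, then
`ker pₙ(Tₐ) = u₁C(a) + ⋯ + uₙC(a)`. -/
theorem ker_wedderburn_operator {K R : Type*} [DivisionRing K] [Ring R]
    (S : K →+* K) (D : K →+ K)
    (hD : ∀ a b : K, D (a * b) = S a * D b + D a * b)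
    (ι : K →+* R) (t : R) (h : IsSkewPolyRing S D ι t)
    (a : K) (n : ℕ) (u : Fin n → K) (hu : ∀ i, u i ≠ 0)
    (hind : ∀ c : Fin n → K, (∀ i, c i ∈ sdCentralizer S D a) →
      ∑ i, u i * c i = 0 → ∀ i, c i = 0)
    (p : R) (hpm : SMonic h p)
    (hps : Ideal.span {p} = ⨅ i : Fin n, Ideal.span {t - ι (sdConj S D a (u i))}) :
    ∀ v : K, ((coeffs h p).sum fun i k => k * (sdT S D a)^[i] v) = 0 ↔
      ∃ c : Fin n → K, (∀ i, c i ∈ sdCentralizer S D a) ∧ v = ∑ i, u i * c i := by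
  intro v
  have hca : ∀ c : K, c ∈ sdCentralizer S D a ↔ S c * a + D c = a * c := by
    intro c
    constructor
    · rintro (rfl | hc)
      · exact ca_zero
      · by_cases h0 : c = 0
        · rw [h0]; exact ca_zero
        · have := congrArg (· * c) hc
          rw [add_mul, inv_mul_cancel_right₀ h0, inv_mul_cancel_right₀ h0] at this
          exact this
    · intro hc
      by_cases h0 : c = 0
      · exact Or.inl h0
      · refine Or.inr ?_
        have := congrArg (· * c⁻¹) hc
        rw [add_mul, mul_inv_cancel_right₀ h0] at this
        exact this
  have hEv : ∀ i : Fin n, sEv h a p (u i) = 0 := by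
    intro i
    have hself : p ∈ Ideal.span {p} := Submodule.mem_span_singleton_self p
    rw [hps] at hself
    exact (mem_span_linear_iff h a hD (hu i) p).mp ((Ideal.mem_iInf.mp hself) i)
  constructor
  · intro hv0
    change sEv h a p v = 0 at hv0
    obtain ⟨q, d, hdn, hqb, hqt, hqmem⟩ := exists_q h a hD n u hu n
    have hq_inf : q ∈ ⨅ i : Fin n, Ideal.span {t - ι (sdConj S D a (u i))} :=
      Ideal.mem_iInf.mpr fun i => hqmem i i.isLt
    rw [← hps] at hq_inf
    obtain ⟨g, hg⟩ := Submodule.mem_span_singleton.mp hq_inf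
    rw [smul_eq_mul] at hg
    have hdegp : sdeg h p ≤ d := sdeg_le_of_factor h p g q d hg.symm hqb
      (by rw [hqt]; exact one_ne_zero) hpm
    have hdp : sdeg h p ≤ n := le_trans hdegp hdn
    set xf : Fin (n + 1) → K := Fin.cons v u with hxf
    have hx : ∀ i : Fin (n + 1), sEv h a p (xf i) = 0 := by
      intro i
      refine Fin.cases ?_ ?_ i
      · rw [hxf, Fin.cons_zero]; exact hv0
      · intro i'
        rw [hxf, Fin.cons_succ]
        exact hEv i'
    obtain ⟨c, hcmem, hcsum, i0, hi0⟩ := ker_dep_pad h a hD (sdeg h p) n hdp p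
      (degLe_sdeg h p) hpm xf hx
    rw [Fin.sum_univ_succ] at hcsum
    simp only [hxf, Fin.cons_zero, Fin.cons_succ] at hcsum
    by_cases hc0 : c 0 = 0
    · exfalso
      have hallz : ∀ i : Fin n, c i.succ = 0 := by
        apply hind
        · intro i
          rw [hca]
          exact hcmem _
        · rw [hc0, mul_zero, zero_add] at hcsum
          exact hcsum
      exact hi0 (Fin.cases hc0 hallz i0)
    · refine ⟨fun i => -(c i.succ * (c 0)⁻¹), ?_, ?_⟩
      · intro i
        rw [hca]
        exact ca_neg (ca_mul hD (hcmem _) (ca_inv hD (hcmem 0)))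
      · have h1 : v * c 0 = -(∑ i : Fin n, u i * c i.succ) := by
          rw [eq_neg_iff_add_eq_zero]
          exact hcsum
        have h2 : v = -(∑ i : Fin n, u i * c i.succ) * (c 0)⁻¹ := by
          rw [← h1, mul_inv_cancel_right₀ hc0]
        have h3 : ∑ i : Fin n, u i * -(c i.succ * (c 0)⁻¹)
            = -(∑ i : Fin n, u i * c i.succ) * (c 0)⁻¹ := by
          rw [neg_mul, Finset.sum_mul, ← Finset.sum_neg_distrib]
          apply Finset.sum_congr rfl
          intro i _
          rw [mul_neg, mul_assoc]
        rw [h2, h3]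
  · rintro ⟨c, hcmem, rfl⟩
    change sEv h a p (∑ i, u i * c i) = 0
    rw [show sEv h a p (∑ i, u i * c i) = ∑ i, sEv h a p (u i * c i) from
      map_sum (sEvR h a p) _ _]
    apply Finset.sum_eq_zero
    intro i _
    rw [sEv_smul h a hD p ((hca _).mp (hcmem i)), hEv i, zero_mul]
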